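/- arXiv:1306.2663 — 2 statements merged into one kernel-verified Lean document; each statement's English description precedes it below -/
import Mathlib

section
/- Let V be an n×n real orthogonal matrix (VᵀV = I), let λ ∈ ℝⁿ, and let ν ≥ 0. Let Z = V·diag(λ)·Vᵀ and W = V·diag(max(0, λ₁ − ν), …, max(0, λₙ − ν))·Vᵀ. Then W minimizes the proximal objective over the positive semidefinite cone: for every n×n real symmetric positive semidefinite matrix X, ν·tr(W) + (1/2)·‖W − Z‖_F² ≤ ν·tr(X) + (1/2)·‖X − Z‖_F². -/
open Matrix Finset

lemma trace_mul_transpose_nonneg {n : ℕ} (A : Matrix (Fin n) (Fin n) ℝ) :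
    0 ≤ (A * Aᵀ).trace := by
  have : (A * Aᵀ).trace = ∑ i, ∑ j, (A i j) ^ 2 := by
    simp [Matrix.trace, Matrix.diag, Matrix.mul_apply, sq]
  rw [this]
  positivity

lemma psd_diag_entry_nonneg {n : ℕ} {M : Matrix (Fin n) (Fin n) ℝ}
    (hM : M.PosSemidef) (i : Fin n) : 0 ≤ M i i := by
  have := hM.dotProduct_mulVec_nonneg (Pi.single i 1)
  simpa [dotProduct, Matrix.mulVec, Pi.single_apply] using this

lemma psd_trace_nonneg {n : ℕ} {M : Matrix (Fin n) (Fin n) ℝ}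
    (hM : M.PosSemidef) : 0 ≤ M.trace := by
  exact Finset.sum_nonneg fun i _ => psd_diag_entry_nonneg hM i

open scoped MatrixOrder in
lemma trace_mul_psd_nonneg {n : ℕ} {G X : Matrix (Fin n) (Fin n) ℝ}
    (hG : G.PosSemidef) (hX : X.PosSemidef) : 0 ≤ (G * X).trace := by
  obtain ⟨B, hB⟩ := CStarAlgebra.nonneg_iff_eq_star_mul_self.mp hX.nonneg
  rw [Matrix.star_eq_conjTranspose] at hB
  have h1 : (G * X).trace = (B * G * Bᴴ).trace := by
    rw [hB, ← Matrix.trace_mul_cycle, Matrix.mul_assoc]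
  rw [h1]
  exact psd_trace_nonneg (hG.mul_mul_conjTranspose_same B)

/-- The shrinkage operator solves the nuclear-norm proximal subproblem over
the positive semidefinite cone: with `V` orthogonal (`Vᵀ·V = I`), `λ ∈ ℝⁿ`,
`ν ≥ 0`, `Z = V·diag(λ)·Vᵀ` and `W = V·diag(max(0, λᵢ − ν))·Vᵀ`, for every
real symmetric positive semidefinite `X`,
`ν·tr(W) + ½‖W − Z‖_F² ≤ ν·tr(X) + ½‖X − Z‖_F²`,
where `‖A‖_F = √(tr(A·Aᵀ))`. -/
theorem shrinkage_prox_optimal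
    {n : ℕ} (V : Matrix (Fin n) (Fin n) ℝ) (hV : Vᵀ * V = 1)
    (l : Fin n → ℝ) (ν : ℝ) (hν : 0 ≤ ν)
    (Z W : Matrix (Fin n) (Fin n) ℝ)
    (hZ : Z = V * Matrix.diagonal l * Vᵀ)
    (hW : W = V * Matrix.diagonal (fun i => max 0 (l i - ν)) * Vᵀ) :
    ∀ X : Matrix (Fin n) (Fin n) ℝ, X.PosSemidef →
      ν * W.trace + (1 / 2) * (Real.sqrt (((W - Z) * (W - Z)ᵀ).trace)) ^ 2 ≤
        ν * X.trace + (1 / 2) * (Real.sqrt (((X - Z) * (X - Z)ᵀ).trace)) ^ 2 := by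
  intro X hX
  have hVV : V * Vᵀ = 1 := mul_eq_one_comm.mp hV
  -- symmetry
  have hXs : Xᵀ = X := by
    have := hX.isHermitian
    simpa [Matrix.IsHermitian, Matrix.conjTranspose_eq_transpose_of_trivial] using this
  have hWs : Wᵀ = W := by
    rw [hW]; simp [Matrix.transpose_mul, Matrix.mul_assoc]
  have hZs : Zᵀ = Z := by
    rw [hZ]; simp [Matrix.transpose_mul, Matrix.mul_assoc]
  -- the gradient matrix G
  set d : Fin n → ℝ := fun i => ν + max 0 (l i - ν) - l i with hd
  set G : Matrix (Fin n) (Fin n) ℝ := V * Matrix.diagonal d * Vᵀ with hGdef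
  have hdnn : 0 ≤ d := by
    intro i
    simp only [hd, Pi.zero_apply]
    rcases le_or_gt (l i) ν with h | h
    · simp [max_eq_left (by linarith : l i - ν ≤ 0)]; linarith
    · simp [max_eq_right (by linarith : (0:ℝ) ≤ l i - ν)]
  have hGpsd : G.PosSemidef := by
    have h1 : (Matrix.diagonal d).PosSemidef := Matrix.PosSemidef.diagonal hdnn
    have := h1.mul_mul_conjTranspose_same V
    simpa [Matrix.conjTranspose_eq_transpose_of_trivial] using this
  have hG : G = ν • (1 : Matrix (Fin n) (Fin n) ℝ) + W - Z := by
    rw [hGdef, hW, hZ]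
    have : Matrix.diagonal d = ν • (1 : Matrix (Fin n) (Fin n) ℝ)
        + Matrix.diagonal (fun i => max 0 (l i - ν)) - Matrix.diagonal l := by
      ext i j
      by_cases h : i = j <;> simp [Matrix.diagonal, h, hd, Matrix.one_apply]
    rw [this]
    simp only [Matrix.mul_sub, Matrix.mul_add, Matrix.sub_mul, Matrix.add_mul,
      Matrix.mul_smul, Matrix.smul_mul, Matrix.mul_one]
    rw [hVV]
  -- complementarity : trace (G * W) = 0
  have hGW : (G * W).trace = 0 := by
    have hGWmul : G * W = V * (Matrix.diagonal (fun i => d i * max 0 (l i - ν))) * Vᵀ := by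
      rw [hGdef, hW]
      rw [show V * Matrix.diagonal d * Vᵀ * (V * Matrix.diagonal (fun i => max 0 (l i - ν)) * Vᵀ)
          = V * Matrix.diagonal d * (Vᵀ * V) * Matrix.diagonal (fun i => max 0 (l i - ν)) * Vᵀ by
        simp [Matrix.mul_assoc]]
      rw [hV]
      simp [Matrix.diagonal_mul_diagonal, Matrix.mul_assoc]
    rw [hGWmul]
    rw [← Matrix.trace_mul_cycle, Matrix.mul_assoc, hV, Matrix.mul_one,
      Matrix.trace_diagonal]
    apply Finset.sum_eq_zero
    intro i _
    rcases le_or_gt (l i) ν with h | h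
    · simp [max_eq_left (by linarith : l i - ν ≤ 0)]
    · simp [hd, max_eq_right (by linarith : (0:ℝ) ≤ l i - ν)]
  have hGX : 0 ≤ (G * X).trace := trace_mul_psd_nonneg hGpsd hX
  -- the distance term
  have hXW : 0 ≤ ((X - W) * (X - W)).trace := by
    have := trace_mul_transpose_nonneg (X - W)
    rwa [Matrix.transpose_sub, hXs, hWs] at this
  -- rewrite sqrt squares
  have hsq1 : (Real.sqrt (((W - Z) * (W - Z)ᵀ).trace)) ^ 2 = ((W - Z) * (W - Z)ᵀ).trace :=
    Real.sq_sqrt (trace_mul_transpose_nonneg _)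
  have hsq2 : (Real.sqrt (((X - Z) * (X - Z)ᵀ).trace)) ^ 2 = ((X - Z) * (X - Z)ᵀ).trace :=
    Real.sq_sqrt (trace_mul_transpose_nonneg _)
  rw [hsq1, hsq2]
  -- expand everything
  rw [hG] at hGX hGW
  simp only [Matrix.transpose_sub, hXs, hWs, hZs, Matrix.sub_mul, Matrix.mul_sub,
    Matrix.add_mul, Matrix.smul_mul, Matrix.one_mul, Matrix.trace_sub, Matrix.trace_add,
    Matrix.trace_smul, smul_eq_mul] at hGX hGW hXW ⊢
  have c1 : (Z * X).trace = (X * Z).trace := Matrix.trace_mul_comm Z X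
  have c2 : (Z * W).trace = (W * Z).trace := Matrix.trace_mul_comm Z W
  have c3 : (X * W).trace = (W * X).trace := Matrix.trace_mul_comm X W
  linarith
end

section
/- Let ν ≥ 0, let V₁ and V₂ be n×n real orthogonal matrices (VᵢᵀVᵢ = I), and let λ¹, λ² ∈ ℝⁿ. Set Z₁ = V₁·diag(λ¹)·V₁ᵀ, Z₂ = V₂·diag(λ²)·V₂ᵀ, W₁ = V₁·diag(max(0, λ¹ᵢ − ν))·V₁ᵀ, and W₂ = V₂·diag(max(0, λ²ᵢ − ν))·V₂ᵀ. Then the matrix shrinkage operator is nonexpansive in the Frobenius norm: ‖W₁ − W₂‖_F ≤ ‖Z₁ − Z₂‖_F. -/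
open Matrix Finset

private lemma shrink_entry {n : ℕ} (Q : Matrix (Fin n) (Fin n) ℝ) (a b : Fin n → ℝ) :
    (diagonal a * Q * diagonal b * Qᵀ).trace = ∑ i, ∑ j, a i * b j * (Q i j)^2 := by
  simp only [Matrix.trace, Matrix.diag, Matrix.mul_apply, Matrix.diagonal_apply,
    Matrix.transpose_apply, ite_mul, mul_ite, zero_mul, mul_zero,
    Finset.sum_ite_eq, Finset.sum_ite_eq', Finset.mem_univ, if_true,
    Finset.sum_mul, Finset.mul_sum]
  apply Finset.sum_congr rfl; intro i _
  apply Finset.sum_congr rfl; intro j _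
  ring

private lemma shrink_cross {n : ℕ} (V W : Matrix (Fin n) (Fin n) ℝ) (a b : Fin n → ℝ) :
    ((V * diagonal a * Vᵀ) * (W * diagonal b * Wᵀ)).trace
      = ∑ i, ∑ j, a i * b j * ((Vᵀ * W) i j)^2 := by
  rw [show V * diagonal a * Vᵀ * (W * diagonal b * Wᵀ)
      = V * (diagonal a * Vᵀ * (W * diagonal b * Wᵀ)) from by
    simp only [mul_assoc], Matrix.trace_mul_comm]
  rw [show diagonal a * Vᵀ * (W * diagonal b * Wᵀ) * V
      = diagonal a * (Vᵀ * W) * diagonal b * (Vᵀ * W)ᵀ from by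
    simp only [transpose_mul, transpose_transpose, mul_assoc]]
  exact shrink_entry _ _ _

private lemma shrink_lip (x y : ℝ) : (max 0 x - max 0 y)^2 ≤ (x - y)^2 := by
  rcases le_total x 0 with h1 | h1 <;> rcases le_total y 0 with h2 | h2
  · rw [max_eq_left h1, max_eq_left h2]; nlinarith
  · rw [max_eq_left h1, max_eq_right h2]; nlinarith
  · rw [max_eq_right h1, max_eq_left h2]; nlinarith
  · rw [max_eq_right h1, max_eq_right h2]

/-- Nonexpansiveness of the matrix shrinkage operator in the Frobenius norm
(`‖A‖_F = √(tr(A·Aᵀ))`): with orthogonal `V₁, V₂` (`VᵢᵀVᵢ = I`), vectors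
`λ¹, λ² ∈ ℝⁿ`, threshold `ν ≥ 0`, `Zᵢ = Vᵢ·diag(λⁱ)·Vᵢᵀ` and
`Wᵢ = Vᵢ·diag(max(0, λⁱ − ν))·Vᵢᵀ`, one has `‖W₁ − W₂‖_F ≤ ‖Z₁ − Z₂‖_F`. -/
theorem shrinkage_nonexpansive
    {n : ℕ} (ν : ℝ) (hν : 0 ≤ ν)
    (V₁ V₂ : Matrix (Fin n) (Fin n) ℝ)
    (hV₁ : V₁ᵀ * V₁ = 1) (hV₂ : V₂ᵀ * V₂ = 1)
    (l₁ l₂ : Fin n → ℝ)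
    (Z₁ Z₂ W₁ W₂ : Matrix (Fin n) (Fin n) ℝ)
    (hZ₁ : Z₁ = V₁ * Matrix.diagonal l₁ * V₁ᵀ)
    (hZ₂ : Z₂ = V₂ * Matrix.diagonal l₂ * V₂ᵀ)
    (hW₁ : W₁ = V₁ * Matrix.diagonal (fun i => max 0 (l₁ i - ν)) * V₁ᵀ)
    (hW₂ : W₂ = V₂ * Matrix.diagonal (fun i => max 0 (l₂ i - ν)) * V₂ᵀ) :
    Real.sqrt (((W₁ - W₂) * (W₁ - W₂)ᵀ).trace) ≤
      Real.sqrt (((Z₁ - Z₂) * (Z₁ - Z₂)ᵀ).trace) := by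
  have hV₁' : V₁ * V₁ᵀ = 1 := mul_eq_one_comm.mp hV₁
  have hV₂' : V₂ * V₂ᵀ = 1 := mul_eq_one_comm.mp hV₂
  set Q := V₁ᵀ * V₂ with hQ
  have hQQt : Q * Qᵀ = 1 := by
    simp only [hQ, transpose_mul, transpose_transpose]
    calc V₁ᵀ * V₂ * (V₂ᵀ * V₁) = V₁ᵀ * (V₂ * V₂ᵀ) * V₁ := by
          simp only [mul_assoc]
      _ = 1 := by rw [hV₂', mul_one, hV₁]
  have hQtQ : Qᵀ * Q = 1 := by
    simp only [hQ, transpose_mul, transpose_transpose]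
    calc V₂ᵀ * V₁ * (V₁ᵀ * V₂) = V₂ᵀ * (V₁ * V₁ᵀ) * V₂ := by
          simp only [mul_assoc]
      _ = 1 := by rw [hV₁', mul_one, hV₂]
  have hrow : ∀ i, ∑ j, (Q i j)^2 = 1 := by
    intro i
    have h : (Q * Qᵀ) i i = (1 : Matrix (Fin n) (Fin n) ℝ) i i := by rw [hQQt]
    simpa [Matrix.mul_apply, Matrix.one_apply, sq] using h
  have hcol : ∀ j, ∑ i, (Q i j)^2 = 1 := by
    intro j
    have h : (Qᵀ * Q) j j = (1 : Matrix (Fin n) (Fin n) ℝ) j j := by rw [hQtQ]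
    simpa [Matrix.mul_apply, Matrix.one_apply, sq] using h
  -- master trace formula
  have key : ∀ a b : Fin n → ℝ,
      ((V₁ * diagonal a * V₁ᵀ - V₂ * diagonal b * V₂ᵀ) *
        (V₁ * diagonal a * V₁ᵀ - V₂ * diagonal b * V₂ᵀ)ᵀ).trace
      = ∑ i, ∑ j, (Q i j)^2 * (a i - b j)^2 := by
    intro a b
    set A := V₁ * diagonal a * V₁ᵀ with hA
    set B := V₂ * diagonal b * V₂ᵀ with hB
    have hAt : Aᵀ = A := by simp [hA, transpose_mul, mul_assoc]
    have hBt : Bᵀ = B := by simp [hB, transpose_mul, mul_assoc]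
    have expand : (A - B) * (A - B) = A*A - A*B - B*A + B*B := by noncomm_ring
    have trAA : (A*A).trace = ∑ i, (a i)^2 := by
      rw [hA, shrink_cross, hV₁]
      simp [Matrix.one_apply, sq]
    have trBB : (B*B).trace = ∑ j, (b j)^2 := by
      rw [hB, shrink_cross, hV₂]
      simp [Matrix.one_apply, sq]
    have trAB : (A*B).trace = ∑ i, ∑ j, a i * b j * (Q i j)^2 := by
      rw [hA, hB, shrink_cross]
    have trBA : (B*A).trace = ∑ i, ∑ j, a i * b j * (Q i j)^2 := by
      rw [Matrix.trace_mul_comm, trAB]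
    rw [transpose_sub, hAt, hBt, expand, trace_add, trace_sub, trace_sub,
      trAA, trBB, trAB, trBA]
    have e1 : ∑ i, ∑ j, (Q i j)^2 * (a i)^2 = ∑ i, (a i)^2 := by
      apply Finset.sum_congr rfl; intro i _
      rw [← Finset.sum_mul, hrow, one_mul]
    have e2 : ∑ i, ∑ j, (Q i j)^2 * (b j)^2 = ∑ j, (b j)^2 := by
      rw [Finset.sum_comm]
      apply Finset.sum_congr rfl; intro j _
      rw [← Finset.sum_mul, hcol, one_mul]
    have e3 : ∑ i, ∑ j, (Q i j)^2 * (a i - b j)^2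
        = (∑ i, ∑ j, (Q i j)^2 * (a i)^2) + (∑ i, ∑ j, (Q i j)^2 * (b j)^2)
          - 2 * ∑ i, ∑ j, a i * b j * (Q i j)^2 := by
      rw [Finset.mul_sum, ← Finset.sum_add_distrib, ← Finset.sum_sub_distrib]
      apply Finset.sum_congr rfl; intro i _
      rw [Finset.mul_sum, ← Finset.sum_add_distrib, ← Finset.sum_sub_distrib]
      apply Finset.sum_congr rfl; intro j _
      ring
    rw [e3, e1, e2]
    ring
  rw [hZ₁, hZ₂, hW₁, hW₂, key, key]
  apply Real.sqrt_le_sqrt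
  apply Finset.sum_le_sum; intro i _
  apply Finset.sum_le_sum; intro j _
  apply mul_le_mul_of_nonneg_left _ (sq_nonneg _)
  have h := shrink_lip (l₁ i - ν) (l₂ j - ν)
  have e : l₁ i - ν - (l₂ j - ν) = l₁ i - l₂ j := by ring
  rwa [e] at h
end
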